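/- arXiv:math/0211448 — 5 statements merged into one kernel-verified Lean document; each statement's English description precedes it below -/
import Mathlib

section
/- Let b_k (k even, k ≥ 2) be a given sequence of reals, and define a_0 = 1 and a_k = (1/k) ∑_{2 ≤ m ≤ k, m even} a_{k−m} b_m for k even. Define c^n_k recursively by c^n_0 = 1 and c^n_k = c^{n−1}_k + ∑_{0 ≤ l ≤ k−2, l even} c^{n−1}_l ((n−l−1)!/(n−k)!) b_{k−l}. Then c^n_k = a_k · n!/(n−k)! for all n ≥ k. -/
open Finset

/-- Let `b_k` (k even, `k ≥ 2`) be a sequence of reals, and define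
`a_0 = 1`, `a_k = (1/k) ∑_{2 ≤ m ≤ k, m even} a_{k−m} b_m` for even `k ≥ 2`.
Define `c^n_k` by `c^n_0 = 1`, `c^n_k = 0` for `k > n`, and for even `2 ≤ k ≤ n`
`c^n_k = c^{n−1}_k + ∑_{0 ≤ l ≤ k−2, l even} c^{n−1}_l ((n−l−1)!/(n−k)!) b_{k−l}`.
Then `c^n_k = a_k · n!/(n−k)!` for all even `k ≤ n`. -/
theorem gauge_coefficients_eq
    (b a : ℕ → ℝ) (c : ℕ → ℕ → ℝ)
    (ha0 : a 0 = 1)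
    (haRec : ∀ k, Even k → 2 ≤ k →
      a k = (1 / (k : ℝ)) *
        ∑ m ∈ (range (k + 1)).filter (fun m => Even m ∧ 2 ≤ m), a (k - m) * b m)
    (hc0 : ∀ n, c n 0 = 1)
    (hcTop : ∀ n k, n < k → c n k = 0)
    (hcRec : ∀ n k, Even k → 2 ≤ k → k ≤ n →
      c n k = c (n - 1) k +
        ∑ l ∈ (range (k - 1)).filter (fun l => Even l),
          c (n - 1) l * (((n - l - 1).factorial : ℝ) / ((n - k).factorial : ℝ)) * b (k - l))
    (n k : ℕ) (hk : Even k) (hkn : k ≤ n) :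
    c n k = a k * ((n.factorial : ℝ) / ((n - k).factorial : ℝ)) := by
  induction n using Nat.strong_induction_on generalizing k with
  | _ n IH =>
  rcases Nat.eq_zero_or_pos k with hk0 | hkpos
  · subst hk0
    simp [hc0, ha0, Nat.factorial_ne_zero, div_self]
  · have hk2 : 2 ≤ k := by rcases hk with ⟨r, rfl⟩; omega
    have hn1 : 1 ≤ n := le_trans (by omega) hkn
    have hnlt : n - 1 < n := by omega
    -- Step 1: rewrite the sum using IH and factorial algebra
    have hsum : ∑ l ∈ (range (k-1)).filter (fun l => Even l),
        c (n-1) l * (((n - l - 1).factorial : ℝ) / ((n-k).factorial : ℝ)) * b (k-l)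
        = (((n-1).factorial : ℝ) / ((n-k).factorial : ℝ)) *
          ∑ l ∈ (range (k-1)).filter (fun l => Even l), a l * b (k - l) := by
      rw [Finset.mul_sum]
      apply Finset.sum_congr rfl
      intro l hl
      simp only [Finset.mem_filter, Finset.mem_range] at hl
      obtain ⟨hlk, hle⟩ := hl
      have hln : l ≤ n - 1 := by omega
      rw [IH (n-1) hnlt l hle hln]
      have h1 : n - 1 - l = n - l - 1 := by omega
      rw [h1]
      have h2 : ((n - l - 1).factorial : ℝ) ≠ 0 := by
        exact_mod_cast Nat.factorial_ne_zero _
      field_simp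
    -- Step 2: the inner sum equals k * a k by reindexing into haRec
    have hreidx : ∑ l ∈ (range (k-1)).filter (fun l => Even l), a l * b (k - l)
        = ∑ m ∈ (range (k + 1)).filter (fun m => Even m ∧ 2 ≤ m), a (k - m) * b m := by
      apply Finset.sum_nbij' (fun l => k - l) (fun m => k - m)
      · intro l hl
        simp only [Finset.mem_filter, Finset.mem_range] at hl ⊢
        obtain ⟨hlk, hle⟩ := hl
        exact ⟨by omega, (Nat.even_sub (by omega)).2 (by simp [hk, hle]), by omega⟩
      · intro m hm
        simp only [Finset.mem_filter, Finset.mem_range] at hm ⊢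
        obtain ⟨hmk, hme, hm2⟩ := hm
        exact ⟨by omega, (Nat.even_sub (by omega)).2 (by simp [hk, hme])⟩
      · intro l hl; simp only [Finset.mem_filter, Finset.mem_range] at hl; omega
      · intro m hm; simp only [Finset.mem_filter, Finset.mem_range] at hm; omega
      · intro l hl
        simp only [Finset.mem_filter, Finset.mem_range] at hl
        have : k - (k - l) = l := by omega
        rw [this]
    have hak : ∑ l ∈ (range (k-1)).filter (fun l => Even l), a l * b (k - l)
        = (k : ℝ) * a k := by
      rw [hreidx]
      have := haRec k hk hk2
      have hkne : (k : ℝ) ≠ 0 := by positivity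
      field_simp at this
      linarith [this]
    rw [hcRec n k hk hk2 hkn, hsum, hak]
    have hfact : (n.factorial : ℝ) = n * (n-1).factorial := by
      rw [← Nat.mul_factorial_pred (by omega : n ≠ 0)]; push_cast; ring
    rcases eq_or_lt_of_le hkn with heq | hlt
    · subst heq
      rw [hcTop (k-1) k (by omega)]
      simp only [Nat.sub_self, Nat.factorial_zero]
      rw [hfact]
      push_cast
      ring
    · have hIHn : c (n-1) k = a k * (((n-1).factorial : ℝ) / ((n-1-k).factorial : ℝ)) :=
        IH (n-1) hnlt k hk (by omega)
      rw [hIHn]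
      have h1 : n - 1 - k = n - k - 1 := by omega
      rw [h1]
      have h2 : ((n-k).factorial : ℝ) = ((n:ℝ) - (k:ℝ)) * (n-k-1).factorial := by
        rw [← Nat.mul_factorial_pred (by omega : n - k ≠ 0)]
        push_cast [Nat.cast_sub hkn]; ring
      have h3 : ((n-k-1).factorial : ℝ) ≠ 0 := by exact_mod_cast Nat.factorial_ne_zero _
      have h4 : (n:ℝ) - (k:ℝ) ≠ 0 := by
        have : (k:ℝ) < n := by exact_mod_cast hlt
        linarith
      rw [hfact, h2]
      field_simp
      ring
end

section
/- Let D = ∑_{m even} a_m ε^m ∂₁^m act on polynomials in x₁ over ℝ[[ε]], with a_0 = 1. If a star product satisfies x₁^{n−1} * x₁ = x₁^n + ∑_{2≤k≤n, k even} ε^k ((n−1)!/(n−k)!) b_k x₁^{n−k}, and the a_m satisfy a_k = (1/k)∑_{2≤m≤k, m even} a_{k−m} b_m, then the gauge-transformed product f *_{new} g := D⁻¹(Df * Dg) satisfies x₁^{*_{new} n} = x₁^n for all n. -/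
open Finset Polynomial

/-- The coefficient ring `ℝ[ε]`. -/
abbrev Rε : Type := Polynomial ℝ

/-- The algebra `ℝ[ε][x₁]` of polynomials in `x₁` with coefficients in `ℝ[ε]`
(the relevant part of `ℝ[x₁][[ε]]` for star powers of `x₁`). -/
abbrev Aε : Type := Polynomial Rε

/-- The element `ε` of `Aε`. -/
noncomputable def epsA : Aε := Polynomial.C Polynomial.X

/-- The formal differential operator `D = ∑_{m even} a_m ε^m ∂₁^m` acting on
polynomials in `x₁` (the sum is finite on each polynomial). -/
noncomputable def Dop (a : ℕ → ℝ) (p : Aε) : Aε :=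
  ∑ m ∈ range (p.natDegree + 1),
    if Even m then a m • (epsA ^ m * (Polynomial.derivative^[m] p)) else 0

/-- The `n`-fold power of `x₁` for the gauge transformed product
`f *_{new} g = D⁻¹(Df * Dg)`, where `E = D⁻¹`; powers are iterated on the right,
`x₁^{*_{new}(n+1)} = x₁^{*_{new} n} *_{new} x₁`. -/
noncomputable def newPow (star : Aε →ₗ[Rε] Aε →ₗ[Rε] Aε) (E : Aε → Aε) (a : ℕ → ℝ) :
    ℕ → Aε
  | 0 => 1
  | n + 1 => E (star (Dop a (newPow star E a n)) (Dop a Polynomial.X))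

lemma Dop_X_pow (a : ℕ → ℝ) (n : ℕ) :
    Dop a (Polynomial.X ^ n : Aε) =
      ∑ m ∈ range (n + 1), if Even m then
        (a m * (n.descFactorial m : ℝ)) • (epsA ^ m * Polynomial.X ^ (n - m)) else 0 := by
  unfold Dop
  rw [Polynomial.natDegree_X_pow]
  refine Finset.sum_congr rfl fun m _ => ?_
  split_ifs with h
  · rw [Polynomial.iterate_derivative_X_pow_eq_smul]
    rw [mul_smul_comm, Nat.cast_smul_eq_nsmul, ← Nat.cast_smul_eq_nsmul ℝ, mul_smul]
  · rfl

lemma Dop_X (a : ℕ → ℝ) (ha0 : a 0 = 1) : Dop a (Polynomial.X : Aε) = Polynomial.X := by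
  unfold Dop
  rw [Polynomial.natDegree_X]
  simp [Finset.sum_range_succ, ha0, Nat.not_even_one]

lemma descF_split (n j : ℕ) (hj : j ≤ n + 1) :
    (n + 1).descFactorial j = n.descFactorial j + j * n.descFactorial (j - 1) := by
  cases j with
  | zero => simp
  | succ k =>
      simp only [Nat.succ_descFactorial_succ, Nat.descFactorial_succ, Nat.succ_sub_one]
      rw [← add_mul, show n - k + (k + 1) = n + 1 from by omega]

lemma coeff_id (a b : ℕ → ℝ)
    (haRec : ∀ k, Even k → 2 ≤ k →
      a k = (1 / (k : ℝ)) *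
        ∑ m ∈ (range (k + 1)).filter (fun m => Even m ∧ 2 ≤ m), a (k - m) * b m)
    (n j : ℕ) (hj : j ≤ n + 1) (hje : Even j) :
    a j * ((n + 1).descFactorial j : ℝ)
      = a j * (n.descFactorial j : ℝ) +
        ((n.factorial : ℝ) / ((n + 1 - j).factorial : ℝ)) *
          ∑ k ∈ (range (j + 1)).filter (fun k => Even k ∧ 2 ≤ k), a (j - k) * b k := by
  rcases Nat.eq_zero_or_pos j with hj0 | hjpos
  · subst hj0
    rw [show (range 1).filter (fun k => Even k ∧ 2 ≤ k) = ∅ from by decide]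
    simp
  · have hj2 : 2 ≤ j := by
      obtain ⟨r, rfl⟩ := hje; omega
    have hjne : (j : ℝ) ≠ 0 := Nat.cast_ne_zero.mpr (by omega)
    have hsum : (∑ k ∈ (range (j + 1)).filter (fun k => Even k ∧ 2 ≤ k), a (j - k) * b k)
        = (j : ℝ) * a j := by
      rw [haRec j hje hj2]; field_simp
    have hdf : ((n + 1).descFactorial j : ℝ)
        = (n.descFactorial j : ℝ) + (j : ℝ) * (n.descFactorial (j - 1) : ℝ) := by
      rw [descF_split n j hj]; push_cast; ring
    have hfd : ((n.factorial : ℝ) / ((n + 1 - j).factorial : ℝ))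
        = (n.descFactorial (j - 1) : ℝ) := by
      rw [div_eq_iff (by positivity : ((n + 1 - j).factorial : ℝ) ≠ 0)]
      rw [mul_comm, show n + 1 - j = n - (j - 1) from by omega]
      exact_mod_cast (Nat.factorial_mul_descFactorial (show j - 1 ≤ n by omega)).symm
    rw [hsum, hdf, hfd]; ring

lemma cross_sum (a b : ℕ → ℝ) (n : ℕ) :
    (∑ m ∈ (range (n + 1)).filter (fun m => Even m),
      ∑ k ∈ (range (n - m + 2)).filter (fun k => Even k ∧ 2 ≤ k),
        ((a m * (n.descFactorial m : ℝ)) *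
            ((((n - m).factorial : ℝ) / (((n - m + 1 - k).factorial : ℝ))) * b k)) •
          (epsA ^ (m + k) * (Polynomial.X : Aε) ^ (n - m + 1 - k)))
    = ∑ j ∈ (range (n + 2)).filter (fun j => Even j),
        ∑ k ∈ (range (j + 1)).filter (fun k => Even k ∧ 2 ≤ k),
          (((n.factorial : ℝ) / (((n + 1 - j).factorial : ℝ))) * (a (j - k) * b k)) •
            (epsA ^ j * (Polynomial.X : Aε) ^ (n + 1 - j)) := by
  rw [Finset.sum_sigma' , Finset.sum_sigma']
  refine Finset.sum_nbij' (fun p => ⟨p.1 + p.2, p.2⟩) (fun q => ⟨q.1 - q.2, q.2⟩) ?_ ?_ ?_ ?_ ?_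
  · rintro ⟨m, k⟩ hp
    simp only [Finset.mem_sigma, Finset.mem_filter, Finset.mem_range] at hp ⊢
    obtain ⟨⟨hm, hme⟩, hk, hke, hk2⟩ := hp
    exact ⟨⟨by omega, hme.add hke⟩, by omega, hke, hk2⟩
  · rintro ⟨j, k⟩ hq
    simp only [Finset.mem_sigma, Finset.mem_filter, Finset.mem_range] at hq ⊢
    obtain ⟨⟨hj, hje⟩, hk, hke, hk2⟩ := hq
    refine ⟨⟨by omega, ?_⟩, by omega, hke, hk2⟩
    rw [Nat.even_sub (by omega)]
    simp [hje, hke]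
  · rintro ⟨m, k⟩ hp
    simp only [Finset.mem_sigma, Finset.mem_filter, Finset.mem_range] at hp
    simp only [Nat.add_sub_cancel]
  · rintro ⟨j, k⟩ hq
    simp only [Finset.mem_sigma, Finset.mem_filter, Finset.mem_range] at hq
    have : j - k + k = j := by omega
    simp [this]
  · rintro ⟨m, k⟩ hp
    simp only [Finset.mem_sigma, Finset.mem_filter, Finset.mem_range] at hp
    obtain ⟨⟨hm, hme⟩, hk, hke, hk2⟩ := hp
    have he1 : n - m + 1 - k = n + 1 - (m + k) := by omega
    have he2 : m + k - k = m := by omega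
    rw [he1, he2]
    congr 1
    have hfac : ((n.descFactorial m : ℝ)) * ((n - m).factorial : ℝ) = (n.factorial : ℝ) := by
      exact_mod_cast congrArg (Nat.cast (R := ℝ))
        ((mul_comm _ _).trans (Nat.factorial_mul_descFactorial (show m ≤ n by omega)))
    have hD : (((n + 1 - (m + k)).factorial : ℝ)) ≠ 0 := by positivity
    field_simp
    linear_combination a m * b k * hfac

lemma hsm (m : ℕ) (q : Aε) : epsA ^ m * q = (Polynomial.X ^ m : Rε) • q := by
  rw [Polynomial.smul_eq_C_mul, Polynomial.C_pow]; rfl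

set_option maxHeartbeats 1000000 in
lemma key (star : Aε →ₗ[Rε] Aε →ₗ[Rε] Aε) (a b : ℕ → ℝ)
    (haRec : ∀ k, Even k → 2 ≤ k →
      a k = (1 / (k : ℝ)) *
        ∑ m ∈ (range (k + 1)).filter (fun m => Even m ∧ 2 ≤ m), a (k - m) * b m)
    (hstar : ∀ n : ℕ, 1 ≤ n →
      star (Polynomial.X ^ (n - 1)) Polynomial.X
        = Polynomial.X ^ n +
          ∑ k ∈ (range (n + 1)).filter (fun k => Even k ∧ 2 ≤ k),
            ((((n - 1).factorial : ℝ) / ((n - k).factorial : ℝ)) * b k) •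
              (epsA ^ k * Polynomial.X ^ (n - k)))
    (n : ℕ) :
    star (Dop a (Polynomial.X ^ n)) Polynomial.X = Dop a (Polynomial.X ^ (n + 1)) := by
  have hstar' : ∀ m : ℕ, m ≤ n →
      star ((Polynomial.X : Aε) ^ (n - m)) Polynomial.X
        = Polynomial.X ^ (n - m + 1) +
          ∑ k ∈ (range (n - m + 2)).filter (fun k => Even k ∧ 2 ≤ k),
            ((((n - m).factorial : ℝ) / ((n - m + 1 - k).factorial : ℝ)) * b k) •
              (epsA ^ k * Polynomial.X ^ (n - m + 1 - k)) := by
    intro m hm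
    have h := hstar (n - m + 1) (by omega)
    simpa using h
  rw [Dop_X_pow, Dop_X_pow, map_sum, LinearMap.sum_apply]
  have lhs1 : ∀ m ∈ range (n + 1),
      (star (if Even m then
          (a m * (n.descFactorial m : ℝ)) • (epsA ^ m * Polynomial.X ^ (n - m)) else 0))
        Polynomial.X
      = (if Even m then
          (a m * (n.descFactorial m : ℝ)) • (epsA ^ m * Polynomial.X ^ (n - m + 1)) else 0)
        + (if Even m then
            ∑ k ∈ (range (n - m + 2)).filter (fun k => Even k ∧ 2 ≤ k),
              ((a m * (n.descFactorial m : ℝ)) *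
                ((((n - m).factorial : ℝ) / (((n - m + 1 - k).factorial : ℝ))) * b k)) •
                (epsA ^ (m + k) * Polynomial.X ^ (n - m + 1 - k)) else 0) := by
    intro m hm
    rw [Finset.mem_range] at hm
    split_ifs with h
    · rw [hsm, LinearMap.map_smul_of_tower, map_smul, LinearMap.smul_apply, LinearMap.smul_apply,
        hstar' m (by omega), smul_add, smul_add]
      congr 1
      · rw [← hsm]
      · rw [Finset.smul_sum, Finset.smul_sum]
        refine Finset.sum_congr rfl fun k hk => ?_
        rw [smul_comm ((Polynomial.X : Rε) ^ m), ← mul_smul]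
        congr 1
        rw [← hsm, ← mul_assoc, ← pow_add]
    · simp
  rw [Finset.sum_congr rfl lhs1, Finset.sum_add_distrib]
  have rhs1 : ∀ j ∈ range (n + 2),
      (if Even j then
        (a j * (((n + 1).descFactorial j : ℝ))) • (epsA ^ j * Polynomial.X ^ (n + 1 - j))
        else 0)
      = (if Even j then
          (a j * ((n.descFactorial j : ℝ))) • (epsA ^ j * Polynomial.X ^ (n + 1 - j)) else 0)
        + (if Even j then
            ∑ k ∈ (range (j + 1)).filter (fun k => Even k ∧ 2 ≤ k),
              (((n.factorial : ℝ) / (((n + 1 - j).factorial : ℝ))) * (a (j - k) * b k)) •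
                (epsA ^ j * Polynomial.X ^ (n + 1 - j)) else 0) := by
    intro j hj
    rw [Finset.mem_range] at hj
    split_ifs with h
    · rw [coeff_id a b haRec n j (by omega) h, add_smul]
      congr 1
      rw [Finset.mul_sum, Finset.sum_smul]
    · simp
  rw [Finset.sum_congr rfl rhs1, Finset.sum_add_distrib]
  congr 1
  · conv_rhs => rw [Finset.sum_range_succ]
    have hz : (if Even (n + 1) then
        (a (n + 1) * ((n.descFactorial (n + 1) : ℝ))) •
          (epsA ^ (n + 1) * Polynomial.X ^ (n + 1 - (n + 1))) else 0) = (0 : Aε) := by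
      rw [Nat.descFactorial_eq_zero_iff_lt.mpr (by omega)]
      simp
    rw [hz, add_zero]
    refine Finset.sum_congr rfl fun m hm => ?_
    rw [Finset.mem_range] at hm
    rw [show n - m + 1 = n + 1 - m from by omega]
  · rw [← Finset.sum_filter, ← Finset.sum_filter]
    exact cross_sum a b n

/-- Let `D = ∑_{m even} a_m ε^m ∂₁^m` with `a_0 = 1` and `E = D⁻¹`.
If the star product satisfies
`x₁^{n−1} * x₁ = x₁^n + ∑_{2≤k≤n even} ε^k ((n−1)!/(n−k)!) b_k x₁^{n−k}`
and the `a_m` satisfy `a_k = (1/k) ∑_{2≤m≤k even} a_{k−m} b_m`, then the gauge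
transformed product `f *_{new} g := D⁻¹(Df * Dg)` satisfies `x₁^{*_{new} n} = x₁^n`. -/
theorem gauge_transformed_power_trivial
    (star : Aε →ₗ[Rε] Aε →ₗ[Rε] Aε) (E : Aε → Aε) (a b : ℕ → ℝ)
    (hED : ∀ p, E (Dop a p) = p) (hDE : ∀ p, Dop a (E p) = p)
    (ha0 : a 0 = 1)
    (haRec : ∀ k, Even k → 2 ≤ k →
      a k = (1 / (k : ℝ)) *
        ∑ m ∈ (range (k + 1)).filter (fun m => Even m ∧ 2 ≤ m), a (k - m) * b m)
    (hstar : ∀ n : ℕ, 1 ≤ n →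
      star (Polynomial.X ^ (n - 1)) Polynomial.X
        = Polynomial.X ^ n +
          ∑ k ∈ (range (n + 1)).filter (fun k => Even k ∧ 2 ≤ k),
            ((((n - 1).factorial : ℝ) / ((n - k).factorial : ℝ)) * b k) •
              (epsA ^ k * Polynomial.X ^ (n - k))) :
    ∀ n : ℕ, newPow star E a n = Polynomial.X ^ n := by
  intro n
  induction n with
  | zero => simp [newPow]
  | succ n ih =>
      rw [newPow, ih, Dop_X a ha0, key star a b haRec hstar n, hED]
end

section
/- In the algebra 𝓕 = ℝ⟨x₁, x₂, x₃, e^{±x₁}⟩[[ε]]/I_ε, where I_ε is generated by the relations [x₁,x₂] = 2εx₂, [x₁,x₃] = −2εx₃, [x₂,x₃] = 2εA(ε²)sinh(2x₁), e^{±x₁}x₂ = e^{±2ε}x₂e^{±x₁}, e^{±x₁}x₃ = e^{∓2ε}x₃e^{±x₁}, [x₁, e^{±x₁}] = 0, e^{x₁}e^{-x₁} = 1, the set {x₁^{n₁} x₂^{n₂} x₃^{n₃} e^{m x₁} : n_i ∈ ℕ, m ∈ ℤ} spans 𝓕 (every word in the generators can be rewritten as a linear combination of such ordered monomials). -/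
open PowerSeries

noncomputable section

/-- The coefficient ring `R = ℝ[[ε]]`. -/
abbrev Rpow : Type := PowerSeries ℝ

/-- The free associative algebra `𝓕̃ = ℝ⟨x₁,x₂,x₃,e^{x₁},e^{−x₁}⟩[[ε]]` on five
generators (`3` and `4` standing for `e^{x₁}` and `e^{−x₁}`). -/
abbrev FreeF : Type := FreeAlgebra Rpow (Fin 5)

/-- The generator `x₁`. -/
def gx₁ : FreeF := FreeAlgebra.ι Rpow 0
/-- The generator `x₂`. -/
def gx₂ : FreeF := FreeAlgebra.ι Rpow 1
/-- The generator `x₃`. -/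
def gx₃ : FreeF := FreeAlgebra.ι Rpow 2
/-- The generator `e^{x₁}`. -/
def gEp : FreeF := FreeAlgebra.ι Rpow 3
/-- The generator `e^{−x₁}`. -/
def gEm : FreeF := FreeAlgebra.ι Rpow 4

/-- The scalar `ε ∈ ℝ[[ε]]`. -/
def εs : Rpow := PowerSeries.X

/-- The scalar `e^{2ε} ∈ ℝ[[ε]]`. -/
def e2ε : Rpow := PowerSeries.rescale 2 (PowerSeries.exp ℝ)

/-- The scalar `e^{−2ε} ∈ ℝ[[ε]]`. -/
def em2ε : Rpow := PowerSeries.rescale (-2) (PowerSeries.exp ℝ)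

/-- The relations defining the ideal `I_ε` (with `A` the fixed power series `A(ε²)`):
`[x₁,x₂] = 2εx₂`, `[x₁,x₃] = −2εx₃`, `[x₂,x₃] = 2εA(ε²) sinh(2x₁)` (with
`sinh(2x₁) = ((e^{x₁})² − (e^{−x₁})²)/2`), `e^{±x₁}x₂ = e^{±2ε}x₂e^{±x₁}`,
`e^{±x₁}x₃ = e^{∓2ε}x₃e^{±x₁}`, `[x₁,e^{±x₁}] = 0`, `e^{x₁}e^{−x₁} = 1 = e^{−x₁}e^{x₁}`. -/
inductive FRel (A : Rpow) : FreeF → FreeF → Prop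
  | comm12 : FRel A (gx₁ * gx₂ - gx₂ * gx₁) ((2 * εs) • gx₂)
  | comm13 : FRel A (gx₁ * gx₃ - gx₃ * gx₁) (-((2 * εs) • gx₃))
  | comm23 : FRel A (gx₂ * gx₃ - gx₃ * gx₂) ((εs * A) • (gEp ^ 2 - gEm ^ 2))
  | ep2 : FRel A (gEp * gx₂) (e2ε • (gx₂ * gEp))
  | em2 : FRel A (gEm * gx₂) (em2ε • (gx₂ * gEm))
  | ep3 : FRel A (gEp * gx₃) (em2ε • (gx₃ * gEp))
  | em3 : FRel A (gEm * gx₃) (e2ε • (gx₃ * gEm))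
  | commEp : FRel A (gx₁ * gEp) (gEp * gx₁)
  | commEm : FRel A (gx₁ * gEm) (gEm * gx₁)
  | epem : FRel A (gEp * gEm) 1
  | emep : FRel A (gEm * gEp) 1

/-- The quotient algebra `𝓕 = 𝓕̃ / I_ε`. -/
abbrev Falg (A : Rpow) : Type := RingQuot (FRel A)

/-- The quotient map `𝓕̃ → 𝓕`. -/
def πF (A : Rpow) : FreeF →ₐ[Rpow] Falg A := RingQuot.mkAlgHom Rpow (FRel A)

/-- `e^{m x₁}` for `m : ℤ`, read as `(e^{x₁})^m` for `m ≥ 0` and `(e^{−x₁})^{−m}`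
for `m < 0`. -/
def epow (m : ℤ) : FreeF := if 0 ≤ m then gEp ^ m.toNat else gEm ^ (-m).toNat

namespace SpanAux

lemma rel_eq {A : Rpow} {x y : FreeF} (h : FRel A x y) : πF A x = πF A y :=
  RingQuot.mkAlgHom_rel Rpow h

variable (A : Rpow)

def X1 : Falg A := πF A gx₁
def X2 : Falg A := πF A gx₂
def X3 : Falg A := πF A gx₃
def EP : Falg A := πF A gEp
def EM : Falg A := πF A gEm
def EW (m : ℤ) : Falg A := πF A (epow m)

def S : Submodule Rpow (Falg A) :=
  Submodule.span Rpow {y : Falg A | ∃ (n₁ n₂ n₃ : ℕ) (m : ℤ),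
    y = πF A (gx₁ ^ n₁ * gx₂ ^ n₂ * gx₃ ^ n₃ * epow m)}

def Mon (a b c : ℕ) (m : ℤ) : Falg A := X1 A ^ a * X2 A ^ b * X3 A ^ c * EW A m

variable {A}

lemma hX2X1 : X2 A * X1 A = X1 A * X2 A + (-(2 * εs)) • X2 A := by
  have h := rel_eq (FRel.comm12 (A := A))
  simp only [map_sub, map_mul, map_smul] at h
  have h' : X1 A * X2 A - X2 A * X1 A = (2 * εs) • X2 A := h
  have e : X2 A * X1 A = X1 A * X2 A - (X1 A * X2 A - X2 A * X1 A) := by abel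
  rw [e, h']; letI : Algebra ℕ Rpow := Semiring.toNatAlgebra; module

lemma hX3X1 : X3 A * X1 A = X1 A * X3 A + (2 * εs) • X3 A := by
  have h := rel_eq (FRel.comm13 (A := A))
  simp only [map_sub, map_mul, map_smul, map_neg] at h
  have h' : X1 A * X3 A - X3 A * X1 A = -((2 * εs) • X3 A) := h
  have e : X3 A * X1 A = X1 A * X3 A - (X1 A * X3 A - X3 A * X1 A) := by abel
  rw [e, h']; letI : Algebra ℕ Rpow := Semiring.toNatAlgebra; module

lemma hX3X2 : X3 A * X2 A = X2 A * X3 A + (-(εs * A)) • EP A ^ 2 + (εs * A) • EM A ^ 2 := by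
  have h := rel_eq (FRel.comm23 (A := A))
  simp only [map_sub, map_mul, map_smul, map_pow] at h
  have h' : X2 A * X3 A - X3 A * X2 A = (εs * A) • (EP A ^ 2 - EM A ^ 2) := h
  have e : X3 A * X2 A = X2 A * X3 A - (X2 A * X3 A - X3 A * X2 A) := by abel
  rw [e, h']; letI : Algebra ℕ Rpow := Semiring.toNatAlgebra; module

lemma hEpX2 : EP A * X2 A = e2ε • (X2 A * EP A) := by
  have h := rel_eq (FRel.ep2 (A := A))
  simp only [map_mul, map_smul] at h
  exact h

lemma hEmX2 : EM A * X2 A = em2ε • (X2 A * EM A) := by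
  have h := rel_eq (FRel.em2 (A := A))
  simp only [map_mul, map_smul] at h
  exact h

lemma hEpX3 : EP A * X3 A = em2ε • (X3 A * EP A) := by
  have h := rel_eq (FRel.ep3 (A := A))
  simp only [map_mul, map_smul] at h
  exact h

lemma hEmX3 : EM A * X3 A = e2ε • (X3 A * EM A) := by
  have h := rel_eq (FRel.em3 (A := A))
  simp only [map_mul, map_smul] at h
  exact h

lemma hX1Ep : X1 A * EP A = EP A * X1 A := by
  have h := rel_eq (FRel.commEp (A := A))
  simp only [map_mul] at h
  exact h

lemma hX1Em : X1 A * EM A = EM A * X1 A := by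
  have h := rel_eq (FRel.commEm (A := A))
  simp only [map_mul] at h
  exact h

lemma hEpEm : EP A * EM A = 1 := by
  have h := rel_eq (FRel.epem (A := A))
  simp only [map_mul, map_one] at h
  exact h

lemma hEmEp : EM A * EP A = 1 := by
  have h := rel_eq (FRel.emep (A := A))
  simp only [map_mul, map_one] at h
  exact h

lemma swap_pow {g x : Falg A} {s : Rpow} (h : g * x = s • (x * g)) (k : ℕ) :
    g ^ k * x = s ^ k • (x * g ^ k) := by
  induction k with
  | zero => simp
  | succ n ih =>
    calc g ^ (n + 1) * x = g ^ n * (g * x) := by rw [pow_succ, mul_assoc]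
    _ = s • (g ^ n * x * g) := by rw [h, mul_smul_comm, mul_assoc]
    _ = s • ((s ^ n • (x * g ^ n)) * g) := by rw [ih]
    _ = s ^ (n + 1) • (x * g ^ (n + 1)) := by
        rw [smul_mul_assoc, smul_smul, mul_assoc, ← pow_succ, ← pow_succ']

lemma swap_pow' {g x : Falg A} {s : Rpow} (h : g * x = s • (x * g)) (k : ℕ) :
    g * x ^ k = s ^ k • (x ^ k * g) := by
  induction k with
  | zero => simp
  | succ n ih =>
    calc g * x ^ (n + 1) = (g * x ^ n) * x := by rw [pow_succ, mul_assoc]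
    _ = s ^ n • (x ^ n * (g * x)) := by rw [ih, smul_mul_assoc, mul_assoc]
    _ = s ^ n • (x ^ n * (s • (x * g))) := by rw [h]
    _ = s ^ (n + 1) • (x ^ (n + 1) * g) := by
        rw [mul_smul_comm, smul_smul, ← mul_assoc, ← pow_succ, ← pow_succ]

lemma shift_pow {g x : Falg A} {t : Rpow} (h : g * x = x * g + t • g) (k : ℕ) :
    g ^ k * x = x * g ^ k + ((k : Rpow) * t) • g ^ k := by
  induction k with
  | zero => simp
  | succ n ih =>
    calc g ^ (n + 1) * x = g ^ n * (g * x) := by rw [pow_succ, mul_assoc]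
    _ = g ^ n * (x * g) + t • g ^ (n + 1) := by
        rw [h, mul_add, mul_smul_comm, pow_succ]
    _ = (g ^ n * x) * g + t • g ^ (n + 1) := by rw [mul_assoc]
    _ = (x * g ^ n + ((n : Rpow) * t) • g ^ n) * g + t • g ^ (n + 1) := by rw [ih]
    _ = x * g ^ (n + 1) + (((n : Rpow) + 1) * t) • g ^ (n + 1) := by
        simp only [add_mul, smul_mul_assoc, mul_assoc, ← pow_succ]
        letI : Algebra ℕ Rpow := Semiring.toNatAlgebra
        module
    _ = x * g ^ (n + 1) + (((n + 1 : ℕ) : Rpow) * t) • g ^ (n + 1) := by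
        norm_cast

lemma shift_reassoc {p x : Falg A} {t : Rpow} (h : p * x = x * p + t • p) (y : Falg A) :
    p * (x * y) = x * (p * y) + t • (p * y) := by
  rw [← mul_assoc, h, add_mul, smul_mul_assoc, mul_assoc]

lemma swap_reassoc {p x : Falg A} {s : Rpow} (h : p * x = s • (x * p)) (y : Falg A) :
    p * (x * y) = s • (x * (p * y)) := by
  rw [← mul_assoc, h, smul_mul_assoc, mul_assoc]

lemma cons_pow (g : Falg A) (n : ℕ) (y : Falg A) : g ^ n * (g * y) = g ^ (n + 1) * y := by
  rw [← mul_assoc, ← pow_succ]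

lemma EW_eq_pos {m : ℤ} (h : 0 ≤ m) : EW A m = EP A ^ m.toNat := by
  rw [EW, epow, if_pos h, map_pow]; rfl

lemma EW_eq_neg {m : ℤ} (h : ¬ 0 ≤ m) : EW A m = EM A ^ (-m).toNat := by
  rw [EW, epow, if_neg h, map_pow]; rfl

lemma EW_zero : EW A 0 = 1 := by rw [EW_eq_pos le_rfl]; simp

lemma EP_mul_EW (m : ℤ) : EP A * EW A m = EW A (m + 1) := by
  by_cases h : 0 ≤ m
  · rw [EW_eq_pos h, EW_eq_pos (by omega), ← pow_succ']
    congr 1; omega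
  · have hk : (-m).toNat = ((-m).toNat - 1) + 1 := by omega
    rw [EW_eq_neg h, hk, pow_succ', ← mul_assoc, hEpEm, one_mul]
    by_cases h1 : 0 ≤ m + 1
    · have hm : m = -1 := by omega
      subst hm
      rw [EW_eq_pos h1]
      norm_num
    · rw [EW_eq_neg h1]
      congr 1; omega

lemma EM_mul_EW (m : ℤ) : EM A * EW A m = EW A (m - 1) := by
  by_cases h : 0 ≤ m - 1
  · have hk : m.toNat = (m - 1).toNat + 1 := by omega
    rw [EW_eq_pos (by omega : (0:ℤ) ≤ m), hk, pow_succ', ← mul_assoc, hEmEp, one_mul,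
      EW_eq_pos h]
  · by_cases h0 : 0 ≤ m
    · have hm : m = 0 := by omega
      subst hm
      rw [EW_zero, mul_one, EW_eq_neg h]
      norm_num
    · rw [EW_eq_neg h0, EW_eq_neg h, ← pow_succ']
      congr 1; omega

lemma EW_mul_EP (m : ℤ) : EW A m * EP A = EW A (m + 1) := by
  by_cases h : 0 ≤ m
  · rw [EW_eq_pos h, EW_eq_pos (by omega), ← pow_succ]
    congr 1; omega
  · have hk : (-m).toNat = ((-m).toNat - 1) + 1 := by omega
    rw [EW_eq_neg h, hk, pow_succ, mul_assoc, hEmEp, mul_one]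
    by_cases h1 : 0 ≤ m + 1
    · have hm : m = -1 := by omega
      subst hm
      rw [EW_eq_pos h1]
      norm_num
    · rw [EW_eq_neg h1]
      congr 1; omega

lemma EW_mul_EM (m : ℤ) : EW A m * EM A = EW A (m - 1) := by
  by_cases h : 0 ≤ m - 1
  · have hk : m.toNat = (m - 1).toNat + 1 := by omega
    rw [EW_eq_pos (by omega : (0:ℤ) ≤ m), hk, pow_succ, mul_assoc, hEpEm, mul_one,
      EW_eq_pos h]
  · by_cases h0 : 0 ≤ m
    · have hm : m = 0 := by omega
      subst hm
      rw [EW_zero, one_mul, EW_eq_neg h]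
      norm_num
    · rw [EW_eq_neg h0, EW_eq_neg h, ← pow_succ]
      congr 1; omega

lemma EP2_mul_EW (m : ℤ) : EP A ^ 2 * EW A m = EW A (m + 2) := by
  rw [pow_two, mul_assoc, EP_mul_EW, EP_mul_EW]
  congr 1; omega

lemma EM2_mul_EW (m : ℤ) : EM A ^ 2 * EW A m = EW A (m - 2) := by
  rw [pow_two, mul_assoc, EM_mul_EW, EM_mul_EW]
  congr 1; omega

lemma EW_comm_X1 (m : ℤ) : EW A m * X1 A = X1 A * EW A m := by
  by_cases h : 0 ≤ m
  · rw [EW_eq_pos h]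
    exact ((Commute.pow_right (hX1Ep (A := A)) _)).symm
  · rw [EW_eq_neg h]
    exact ((Commute.pow_right (hX1Em (A := A)) _)).symm

lemma EW_swap_X2 (m : ℤ) : ∃ u : Rpow, EW A m * X2 A = u • (X2 A * EW A m) := by
  by_cases h : 0 ≤ m
  · exact ⟨_, by rw [EW_eq_pos h]; exact swap_pow hEpX2 _⟩
  · exact ⟨_, by rw [EW_eq_neg h]; exact swap_pow hEmX2 _⟩

lemma EW_swap_X3 (m : ℤ) : ∃ u : Rpow, EW A m * X3 A = u • (X3 A * EW A m) := by
  by_cases h : 0 ≤ m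
  · exact ⟨_, by rw [EW_eq_pos h]; exact swap_pow hEpX3 _⟩
  · exact ⟨_, by rw [EW_eq_neg h]; exact swap_pow hEmX3 _⟩

lemma X3pow_X2 (c : ℕ) : ∃ p q : Rpow, X3 A ^ (c + 1) * X2 A =
    X2 A * X3 A ^ (c + 1) + p • (X3 A ^ c * EP A ^ 2) + q • (X3 A ^ c * EM A ^ 2) := by
  induction c with
  | zero =>
    refine ⟨-(εs * A), εs * A, ?_⟩
    simpa using hX3X2 (A := A)
  | succ n ih =>
    obtain ⟨p, q, ih⟩ := ih
    have hp2 : EP A ^ 2 * X3 A ^ (n + 1) = (em2ε ^ 2) ^ (n + 1) • (X3 A ^ (n + 1) * EP A ^ 2) :=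
      swap_pow' (swap_pow hEpX3 2) (n + 1)
    have hq2 : EM A ^ 2 * X3 A ^ (n + 1) = (e2ε ^ 2) ^ (n + 1) • (X3 A ^ (n + 1) * EM A ^ 2) :=
      swap_pow' (swap_pow hEmX3 2) (n + 1)
    refine ⟨p + (-(εs * A)) * (em2ε ^ 2) ^ (n + 1), q + (εs * A) * (e2ε ^ 2) ^ (n + 1), ?_⟩
    calc X3 A ^ (n + 2) * X2 A = X3 A * (X3 A ^ (n + 1) * X2 A) := by
          rw [← mul_assoc, ← pow_succ']
    _ = X3 A * (X2 A * X3 A ^ (n + 1)) + p • (X3 A * (X3 A ^ n * EP A ^ 2))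
          + q • (X3 A * (X3 A ^ n * EM A ^ 2)) := by
          rw [ih, mul_add, mul_add, mul_smul_comm, mul_smul_comm]
    _ = (X3 A * X2 A) * X3 A ^ (n + 1) + p • (X3 A ^ (n + 1) * EP A ^ 2)
          + q • (X3 A ^ (n + 1) * EM A ^ 2) := by
          simp only [← mul_assoc, ← pow_succ']
    _ = X2 A * X3 A ^ (n + 2)
          + (-(εs * A)) • (EP A ^ 2 * X3 A ^ (n + 1))
          + (εs * A) • (EM A ^ 2 * X3 A ^ (n + 1))
          + p • (X3 A ^ (n + 1) * EP A ^ 2) + q • (X3 A ^ (n + 1) * EM A ^ 2) := by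
          rw [hX3X2, add_mul, add_mul, smul_mul_assoc, smul_mul_assoc, mul_assoc,
            ← pow_succ']
    _ = _ := by
          rw [hp2, hq2, smul_smul, smul_smul]
          letI : Algebra ℕ Rpow := Semiring.toNatAlgebra
          module

lemma mon_mem (a b c : ℕ) (m : ℤ) : Mon A a b c m ∈ S A := by
  apply Submodule.subset_span
  exact ⟨a, b, c, m, by simp only [Mon, X1, X2, X3, EW, map_mul, map_pow]⟩

lemma one_mem_S : (1 : Falg A) ∈ S A := by
  have h := mon_mem (A := A) 0 0 0 0
  simpa [Mon, EW_zero] using h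

lemma mon_mul_X1 (a b c : ℕ) (m : ℤ) : Mon A a b c m * X1 A ∈ S A := by
  have key : Mon A a b c m * X1 A
      = Mon A (a + 1) b c m
        + (((b : Rpow) * (-(2 * εs))) + ((c : Rpow) * (2 * εs))) • Mon A a b c m := by
    simp only [Mon, mul_assoc]
    rw [EW_comm_X1, shift_reassoc (shift_pow hX3X1 c) (EW A m), mul_add, mul_smul_comm,
      shift_reassoc (shift_pow hX2X1 b) (X3 A ^ c * EW A m)]
    simp only [mul_add, mul_smul_comm]
    rw [cons_pow (X1 A) a]
    letI : Algebra ℕ Rpow := Semiring.toNatAlgebra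
    module
  rw [key]
  exact Submodule.add_mem _ (mon_mem _ _ _ _) (Submodule.smul_mem _ _ (mon_mem _ _ _ _))

lemma mon_mul_X2 (a b c : ℕ) (m : ℤ) : Mon A a b c m * X2 A ∈ S A := by
  obtain ⟨u, hu⟩ := EW_swap_X2 (A := A) m
  cases c with
  | zero =>
    have key : Mon A a b 0 m * X2 A = u • Mon A a (b + 1) 0 m := by
      simp only [Mon, pow_zero, mul_one, one_mul, mul_assoc]
      rw [hu]
      simp only [mul_smul_comm]
      rw [cons_pow (X2 A) b]
    rw [key]
    exact Submodule.smul_mem _ _ (mon_mem _ _ _ _)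
  | succ c' =>
    obtain ⟨p, q, h32⟩ := X3pow_X2 (A := A) c'
    have key : Mon A a b (c' + 1) m * X2 A
        = u • Mon A a (b + 1) (c' + 1) m + (u * p) • Mon A a b c' (m + 2)
          + (u * q) • Mon A a b c' (m - 2) := by
      simp only [Mon, mul_assoc]
      rw [hu]
      simp only [mul_smul_comm]
      have h32' : X3 A ^ (c' + 1) * (X2 A * EW A m)
          = X2 A * (X3 A ^ (c' + 1) * EW A m) + p • (X3 A ^ c' * (EP A ^ 2 * EW A m))
            + q • (X3 A ^ c' * (EM A ^ 2 * EW A m)) := by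
        rw [← mul_assoc, h32, add_mul, add_mul, smul_mul_assoc, smul_mul_assoc,
          mul_assoc, mul_assoc, mul_assoc]
      rw [h32', EP2_mul_EW, EM2_mul_EW]
      simp only [mul_add, mul_smul_comm, smul_add, smul_smul]
      rw [cons_pow (X2 A) b]
    rw [key]
    refine Submodule.add_mem _ (Submodule.add_mem _ ?_ ?_) ?_ <;>
      exact Submodule.smul_mem _ _ (mon_mem _ _ _ _)

lemma mon_mul_X3 (a b c : ℕ) (m : ℤ) : Mon A a b c m * X3 A ∈ S A := by
  obtain ⟨u, hu⟩ := EW_swap_X3 (A := A) m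
  have key : Mon A a b c m * X3 A = u • Mon A a b (c + 1) m := by
    simp only [Mon, mul_assoc]
    rw [hu]
    simp only [mul_smul_comm]
    rw [cons_pow (X3 A) c]
  rw [key]
  exact Submodule.smul_mem _ _ (mon_mem _ _ _ _)

lemma mon_mul_EP (a b c : ℕ) (m : ℤ) : Mon A a b c m * EP A ∈ S A := by
  have key : Mon A a b c m * EP A = Mon A a b c (m + 1) := by
    simp only [Mon, mul_assoc]
    rw [EW_mul_EP]
  rw [key]; exact mon_mem _ _ _ _

lemma mon_mul_EM (a b c : ℕ) (m : ℤ) : Mon A a b c m * EM A ∈ S A := by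
  have key : Mon A a b c m * EM A = Mon A a b c (m - 1) := by
    simp only [Mon, mul_assoc]
    rw [EW_mul_EM]
  rw [key]; exact mon_mem _ _ _ _

lemma mem_mul_gen (i : Fin 5) {y : Falg A} (hy : y ∈ S A) :
    y * πF A (FreeAlgebra.ι Rpow i) ∈ S A := by
  induction hy using Submodule.span_induction with
  | mem x hx =>
    obtain ⟨a, b, c, m, rfl⟩ := hx
    have hx' : πF A (gx₁ ^ a * gx₂ ^ b * gx₃ ^ c * epow m) = Mon A a b c m := by
      simp only [Mon, X1, X2, X3, EW, map_mul, map_pow]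
    rw [hx']
    fin_cases i
    · exact mon_mul_X1 a b c m
    · exact mon_mul_X2 a b c m
    · exact mon_mul_X3 a b c m
    · exact mon_mul_EP a b c m
    · exact mon_mul_EM a b c m
  | zero => simp
  | add x y _ _ hx hy => rw [add_mul]; exact Submodule.add_mem _ hx hy
  | smul r x _ hx => rw [smul_mul_assoc]; exact Submodule.smul_mem _ _ hx

lemma mul_mem_S (w : FreeF) : ∀ y ∈ S A, y * πF A w ∈ S A := by
  induction w using FreeAlgebra.induction with
  | grade0 r =>
    intro y hy
    rw [AlgHom.commutes, ← Algebra.commutes, ← Algebra.smul_def]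
    exact Submodule.smul_mem _ _ hy
  | grade1 i =>
    intro y hy
    exact mem_mul_gen i hy
  | mul a b ha hb =>
    intro y hy
    rw [map_mul, ← mul_assoc]
    exact hb _ (ha _ hy)
  | add a b ha hb =>
    intro y hy
    rw [map_add, mul_add]
    exact Submodule.add_mem _ (ha y hy) (hb y hy)

end SpanAux

/-- In `𝓕 = ℝ⟨x₁,x₂,x₃,e^{±x₁}⟩[[ε]] / I_ε`, the ordered monomials
`x₁^{n₁} x₂^{n₂} x₃^{n₃} e^{m x₁}` (`nᵢ ∈ ℕ`, `m ∈ ℤ`) span `𝓕` over `ℝ[[ε]]`. -/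
theorem ordered_monomials_span (A : Rpow) (hA : IsUnit A) :
    Submodule.span Rpow
      {y : Falg A | ∃ (n₁ n₂ n₃ : ℕ) (m : ℤ),
        y = πF A (gx₁ ^ n₁ * gx₂ ^ n₂ * gx₃ ^ n₃ * epow m)} = ⊤ := by
  have key := SpanAux.mul_mem_S (A := A)
  rw [eq_top_iff]
  rintro z -
  obtain ⟨w, rfl⟩ := RingQuot.mkAlgHom_surjective Rpow (FRel A) z
  have h1 := SpanAux.one_mem_S (A := A)
  have h2 := key w 1 h1
  rw [one_mul] at h2
  exact h2

end
end

section
/- The two-sided ideal I_ε of 𝓕̃ = ℝ⟨x₁,x₂,x₃,e^{±x₁}⟩[[ε]] generated by [x₁,x₂]−2εx₂, [x₁,x₃]+2εx₃, [x₂,x₃]−2εA(ε²)sinh(2x₁), e^{±x₁}x₂−e^{±2ε}x₂e^{±x₁}, e^{±x₁}x₃−e^{∓2ε}x₃e^{±x₁}, [x₁,e^{±x₁}] is a coideal for the coproduct Δ (defined by Δx₁ = 1⊗x₁+x₁⊗1, Δx₂ = x₂⊗e^{−x₁}+e^{x₁}⊗x₂, Δx₃ = x₃⊗e^{−x₁}+e^{x₁}⊗x₃,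 Δe^{±x₁} = e^{±x₁}⊗e^{±x₁}): Δ(I_ε) ⊆ I_ε⊗𝓕̃ + 𝓕̃⊗I_ε. -/
open PowerSeries

noncomputable section

open scoped TensorProduct

/-- The coproduct `Δ : 𝓕̃ → 𝓕̃ ⊗ 𝓕̃`, the unique algebra homomorphism with
`Δx₁ = 1⊗x₁ + x₁⊗1`, `Δx₂ = x₂⊗e^{−x₁} + e^{x₁}⊗x₂`, `Δx₃ = x₃⊗e^{−x₁} + e^{x₁}⊗x₃`,
`Δe^{±x₁} = e^{±x₁}⊗e^{±x₁}`. -/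
def ΔF : FreeF →ₐ[Rpow] FreeF ⊗[Rpow] FreeF :=
  FreeAlgebra.lift Rpow fun i : Fin 5 =>
    match i with
    | 0 => 1 ⊗ₜ[Rpow] gx₁ + gx₁ ⊗ₜ[Rpow] 1
    | 1 => gx₂ ⊗ₜ[Rpow] gEm + gEp ⊗ₜ[Rpow] gx₂
    | 2 => gx₃ ⊗ₜ[Rpow] gEm + gEp ⊗ₜ[Rpow] gx₃
    | 3 => gEp ⊗ₜ[Rpow] gEp
    | 4 => gEm ⊗ₜ[Rpow] gEm


/-- The generators of the two-sided ideal `I_ε` (with `A` the fixed power series, and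
`sinh(2x₁) := ((e^{x₁})² − (e^{−x₁})²)/2`, so `2εA sinh(2x₁) = εA((e^{x₁})² − (e^{−x₁})²)`). -/
def IGens (A : Rpow) : Set FreeF :=
  { gx₁ * gx₂ - gx₂ * gx₁ - (2 * εs) • gx₂,
    gx₁ * gx₃ - gx₃ * gx₁ + (2 * εs) • gx₃,
    gx₂ * gx₃ - gx₃ * gx₂ - (εs * A) • (gEp ^ 2 - gEm ^ 2),
    gEp * gx₂ - e2ε • (gx₂ * gEp),
    gEm * gx₂ - em2ε • (gx₂ * gEm),
    gEp * gx₃ - em2ε • (gx₃ * gEp),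
    gEm * gx₃ - e2ε • (gx₃ * gEm),
    gx₁ * gEp - gEp * gx₁,
    gx₁ * gEm - gEm * gx₁,
    gEp * gEm - 1,
    gEm * gEp - 1 }

/-- The two-sided ideal `I_ε` generated by `IGens A`, as an `ℝ[[ε]]`-submodule of `𝓕̃`. -/
def Iε (A : Rpow) : Submodule Rpow FreeF :=
  Submodule.span Rpow {x | ∃ a b : FreeF, ∃ r ∈ IGens A, x = a * r * b}

/-- The submodule `I_ε ⊗ 𝓕̃ + 𝓕̃ ⊗ I_ε` of `𝓕̃ ⊗ 𝓕̃`. -/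
def IεTensor (A : Rpow) : Submodule Rpow (FreeF ⊗[Rpow] FreeF) :=
  Submodule.span Rpow
    ({z | ∃ u ∈ Iε A, ∃ v : FreeF, z = u ⊗ₜ[Rpow] v}
      ∪ {z | ∃ u : FreeF, ∃ v ∈ Iε A, z = u ⊗ₜ[Rpow] v})


def R1 : FreeF := gx₁ * gx₂ - gx₂ * gx₁ - (2 * εs) • gx₂
def R2 : FreeF := gx₁ * gx₃ - gx₃ * gx₁ + (2 * εs) • gx₃
def R3 (A : Rpow) : FreeF := gx₂ * gx₃ - gx₃ * gx₂ - (εs * A) • (gEp ^ 2 - gEm ^ 2)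
def R4 : FreeF := gEp * gx₂ - e2ε • (gx₂ * gEp)
def R5 : FreeF := gEm * gx₂ - em2ε • (gx₂ * gEm)
def R6 : FreeF := gEp * gx₃ - em2ε • (gx₃ * gEp)
def R7 : FreeF := gEm * gx₃ - e2ε • (gx₃ * gEm)
def R8 : FreeF := gx₁ * gEp - gEp * gx₁
def R9 : FreeF := gx₁ * gEm - gEm * gx₁
def R10 : FreeF := gEp * gEm - 1
def R11 : FreeF := gEm * gEp - 1

lemma mem_Iε_of_gen {A : Rpow} {r : FreeF} (hr : r ∈ IGens A) : r ∈ Iε A :=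
  Submodule.subset_span ⟨1, 1, r, hr, by simp⟩

lemma mR1 {A : Rpow} : R1 ∈ Iε A := mem_Iε_of_gen (by simp [IGens, R1])
lemma mR2 {A : Rpow} : R2 ∈ Iε A := mem_Iε_of_gen (by simp [IGens, R2])
lemma mR3 {A : Rpow} : R3 A ∈ Iε A := mem_Iε_of_gen (by simp [IGens, R3])
lemma mR4 {A : Rpow} : R4 ∈ Iε A := mem_Iε_of_gen (by simp [IGens, R4])
lemma mR5 {A : Rpow} : R5 ∈ Iε A := mem_Iε_of_gen (by simp [IGens, R5])
lemma mR6 {A : Rpow} : R6 ∈ Iε A := mem_Iε_of_gen (by simp [IGens, R6])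
lemma mR7 {A : Rpow} : R7 ∈ Iε A := mem_Iε_of_gen (by simp [IGens, R7])
lemma mR8 {A : Rpow} : R8 ∈ Iε A := mem_Iε_of_gen (by simp [IGens, R8])
lemma mR9 {A : Rpow} : R9 ∈ Iε A := mem_Iε_of_gen (by simp [IGens, R9])
lemma mR10 {A : Rpow} : R10 ∈ Iε A := mem_Iε_of_gen (by simp [IGens, R10])
lemma mR11 {A : Rpow} : R11 ∈ Iε A := mem_Iε_of_gen (by simp [IGens, R11])

lemma Iε_mul_left {A : Rpow} (c : FreeF) {u : FreeF} (hu : u ∈ Iε A) : c * u ∈ Iε A := by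
  induction hu using Submodule.span_induction with
  | mem x hx =>
    obtain ⟨a, b, r, hr, rfl⟩ := hx
    exact Submodule.subset_span ⟨c * a, b, r, hr, by noncomm_ring⟩
  | zero => simpa using (Iε A).zero_mem
  | add x y _ _ hx hy => rw [mul_add]; exact add_mem hx hy
  | smul t x _ hx => rw [mul_smul_comm]; exact Submodule.smul_mem _ _ hx

lemma Iε_mul_right {A : Rpow} (c : FreeF) {u : FreeF} (hu : u ∈ Iε A) : u * c ∈ Iε A := by
  induction hu using Submodule.span_induction with
  | mem x hx =>
    obtain ⟨a, b, r, hr, rfl⟩ := hx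
    exact Submodule.subset_span ⟨a, b * c, r, hr, by noncomm_ring⟩
  | zero => simpa using (Iε A).zero_mem
  | add x y _ _ hx hy => rw [add_mul]; exact add_mem hx hy
  | smul t x _ hx => rw [smul_mul_assoc]; exact Submodule.smul_mem _ _ hx

lemma tmul_mem_left {A : Rpow} {u : FreeF} (hu : u ∈ Iε A) (v : FreeF) :
    u ⊗ₜ[Rpow] v ∈ IεTensor A :=
  Submodule.subset_span (Or.inl ⟨u, hu, v, rfl⟩)

lemma tmul_mem_right {A : Rpow} (u : FreeF) {v : FreeF} (hv : v ∈ Iε A) :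
    u ⊗ₜ[Rpow] v ∈ IεTensor A :=
  Submodule.subset_span (Or.inr ⟨u, v, hv, rfl⟩)

lemma IεTensor_mul_left {A : Rpow} (z : FreeF ⊗[Rpow] FreeF) {t : FreeF ⊗[Rpow] FreeF}
    (ht : t ∈ IεTensor A) : z * t ∈ IεTensor A := by
  induction ht using Submodule.span_induction with
  | mem x hx =>
    induction z using TensorProduct.induction_on with
    | zero => simpa using (IεTensor A).zero_mem
    | tmul a b =>
      rcases hx with ⟨u, hu, v, rfl⟩ | ⟨u, v, hv, rfl⟩
      · simpa [Algebra.TensorProduct.tmul_mul_tmul] using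
          tmul_mem_left (Iε_mul_left a hu) (b * v)
      · simpa [Algebra.TensorProduct.tmul_mul_tmul] using
          tmul_mem_right (a * u) (Iε_mul_left b hv)
    | add z1 z2 h1 h2 => rw [add_mul]; exact add_mem h1 h2
  | zero => simpa using (IεTensor A).zero_mem
  | add x y _ _ hx hy => rw [mul_add]; exact add_mem hx hy
  | smul r x _ hx => rw [mul_smul_comm]; exact Submodule.smul_mem _ _ hx

lemma IεTensor_mul_right {A : Rpow} (z : FreeF ⊗[Rpow] FreeF) {t : FreeF ⊗[Rpow] FreeF}
    (ht : t ∈ IεTensor A) : t * z ∈ IεTensor A := by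
  induction ht using Submodule.span_induction with
  | mem x hx =>
    induction z using TensorProduct.induction_on with
    | zero => simpa using (IεTensor A).zero_mem
    | tmul a b =>
      rcases hx with ⟨u, hu, v, rfl⟩ | ⟨u, v, hv, rfl⟩
      · simpa [Algebra.TensorProduct.tmul_mul_tmul] using
          tmul_mem_left (Iε_mul_right a hu) (v * b)
      · simpa [Algebra.TensorProduct.tmul_mul_tmul] using
          tmul_mem_right (u * a) (Iε_mul_right b hv)
    | add z1 z2 h1 h2 => rw [mul_add]; exact add_mem h1 h2
  | zero => simpa using (IεTensor A).zero_mem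
  | add x y _ _ hx hy => rw [add_mul]; exact add_mem hx hy
  | smul r x _ hx => rw [smul_mul_assoc]; exact Submodule.smul_mem _ _ hx

lemma IεTensor_sub_mem {A : Rpow} {a b : FreeF ⊗[Rpow] FreeF} (ha : a ∈ IεTensor A)
    (hb : b ∈ IεTensor A) : a - b ∈ IεTensor A := by
  have := @Submodule.sub_mem Rpow (FreeF ⊗[Rpow] FreeF) _ _ _ (IεTensor A) a b ha hb
  exact this

/-- Explicit coproduct decompositions of the eleven generators. -/
lemma ΔR1 : ΔF R1 = gx₂ ⊗ₜ[Rpow] R9 + gEp ⊗ₜ[Rpow] R1 + R1 ⊗ₜ[Rpow] gEm + R8 ⊗ₜ[Rpow] gx₂ := by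
  simp only [R1, R8, R9, map_sub, map_mul, map_smul, ΔF, gx₁, gx₂, gEp, gEm,
    FreeAlgebra.lift_ι_apply]
  simp only [Algebra.TensorProduct.tmul_mul_tmul, TensorProduct.tmul_sub, TensorProduct.sub_tmul,
    TensorProduct.tmul_add, TensorProduct.add_tmul, TensorProduct.smul_tmul', TensorProduct.tmul_smul,
    mul_sub, sub_mul, mul_add, add_mul, smul_sub, smul_add, one_mul, mul_one]
  abel

lemma ΔR2 : ΔF R2 = gx₃ ⊗ₜ[Rpow] R9 + gEp ⊗ₜ[Rpow] R2 + R2 ⊗ₜ[Rpow] gEm + R8 ⊗ₜ[Rpow] gx₃ := by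
  simp only [R2, R8, R9, map_sub, map_add, map_mul, map_smul, ΔF, gx₁, gx₃, gEp, gEm,
    FreeAlgebra.lift_ι_apply]
  simp only [Algebra.TensorProduct.tmul_mul_tmul, TensorProduct.tmul_sub, TensorProduct.sub_tmul,
    TensorProduct.tmul_add, TensorProduct.add_tmul, TensorProduct.smul_tmul', TensorProduct.tmul_smul,
    mul_sub, sub_mul, mul_add, add_mul, smul_sub, smul_add, one_mul, mul_one]
  abel

lemma ΔR3 (A : Rpow) : ΔF (R3 A) =
    R3 A ⊗ₜ[Rpow] (gEm ^ 2) + (gEp ^ 2) ⊗ₜ[Rpow] R3 A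
      + (gx₂ * gEp) ⊗ₜ[Rpow] R7 - R4 ⊗ₜ[Rpow] (gx₃ * gEm)
      + R6 ⊗ₜ[Rpow] (gx₂ * gEm) - (gx₃ * gEp) ⊗ₜ[Rpow] R5 := by
  simp only [R3, R4, R5, R6, R7, pow_two, map_sub, map_mul, map_smul, ΔF,
    gx₂, gx₃, gEp, gEm, FreeAlgebra.lift_ι_apply]
  simp only [Algebra.TensorProduct.tmul_mul_tmul, TensorProduct.tmul_sub, TensorProduct.sub_tmul,
    TensorProduct.tmul_add, TensorProduct.add_tmul, TensorProduct.smul_tmul', TensorProduct.tmul_smul,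
    mul_sub, sub_mul, mul_add, add_mul, smul_sub, smul_add, one_mul, mul_one]
  abel

lemma ΔR4 : ΔF R4 = R4 ⊗ₜ[Rpow] 1 + (gEp ^ 2) ⊗ₜ[Rpow] R4
    + (gEp * gx₂) ⊗ₜ[Rpow] R10 - e2ε • ((gx₂ * gEp) ⊗ₜ[Rpow] R11) := by
  simp only [R4, R10, R11, pow_two, map_sub, map_mul, map_smul, ΔF, gx₂, gEp, gEm,
    FreeAlgebra.lift_ι_apply]
  simp only [Algebra.TensorProduct.tmul_mul_tmul, Algebra.TensorProduct.one_def,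
    TensorProduct.tmul_sub, TensorProduct.sub_tmul,
    TensorProduct.tmul_add, TensorProduct.add_tmul, TensorProduct.smul_tmul', TensorProduct.tmul_smul,
    mul_sub, sub_mul, mul_add, add_mul, smul_sub, smul_add, one_mul, mul_one]
  abel

lemma ΔR5 : ΔF R5 = 1 ⊗ₜ[Rpow] R5 + R5 ⊗ₜ[Rpow] (gEm ^ 2)
    + R11 ⊗ₜ[Rpow] (gEm * gx₂) - em2ε • (R10 ⊗ₜ[Rpow] (gx₂ * gEm)) := by
  simp only [R5, R10, R11, pow_two, map_sub, map_mul, map_smul, ΔF, gx₂, gEp, gEm,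
    FreeAlgebra.lift_ι_apply]
  simp only [Algebra.TensorProduct.tmul_mul_tmul, Algebra.TensorProduct.one_def,
    TensorProduct.tmul_sub, TensorProduct.sub_tmul,
    TensorProduct.tmul_add, TensorProduct.add_tmul, TensorProduct.smul_tmul', TensorProduct.tmul_smul,
    mul_sub, sub_mul, mul_add, add_mul, smul_sub, smul_add, one_mul, mul_one]
  abel

lemma ΔR6 : ΔF R6 = R6 ⊗ₜ[Rpow] 1 + (gEp ^ 2) ⊗ₜ[Rpow] R6
    + (gEp * gx₃) ⊗ₜ[Rpow] R10 - em2ε • ((gx₃ * gEp) ⊗ₜ[Rpow] R11) := by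
  simp only [R6, R10, R11, pow_two, map_sub, map_mul, map_smul, ΔF, gx₃, gEp, gEm,
    FreeAlgebra.lift_ι_apply]
  simp only [Algebra.TensorProduct.tmul_mul_tmul, Algebra.TensorProduct.one_def,
    TensorProduct.tmul_sub, TensorProduct.sub_tmul,
    TensorProduct.tmul_add, TensorProduct.add_tmul, TensorProduct.smul_tmul', TensorProduct.tmul_smul,
    mul_sub, sub_mul, mul_add, add_mul, smul_sub, smul_add, one_mul, mul_one]
  abel

lemma ΔR7 : ΔF R7 = 1 ⊗ₜ[Rpow] R7 + R7 ⊗ₜ[Rpow] (gEm ^ 2)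
    + R11 ⊗ₜ[Rpow] (gEm * gx₃) - e2ε • (R10 ⊗ₜ[Rpow] (gx₃ * gEm)) := by
  simp only [R7, R10, R11, pow_two, map_sub, map_mul, map_smul, ΔF, gx₃, gEp, gEm,
    FreeAlgebra.lift_ι_apply]
  simp only [Algebra.TensorProduct.tmul_mul_tmul, Algebra.TensorProduct.one_def,
    TensorProduct.tmul_sub, TensorProduct.sub_tmul,
    TensorProduct.tmul_add, TensorProduct.add_tmul, TensorProduct.smul_tmul', TensorProduct.tmul_smul,
    mul_sub, sub_mul, mul_add, add_mul, smul_sub, smul_add, one_mul, mul_one]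
  abel

lemma ΔR8 : ΔF R8 = gEp ⊗ₜ[Rpow] R8 + R8 ⊗ₜ[Rpow] gEp := by
  simp only [R8, map_sub, map_mul, ΔF, gx₁, gEp, FreeAlgebra.lift_ι_apply]
  simp only [Algebra.TensorProduct.tmul_mul_tmul, TensorProduct.tmul_sub, TensorProduct.sub_tmul,
    TensorProduct.tmul_add, TensorProduct.add_tmul, mul_sub, sub_mul, mul_add, add_mul,
    one_mul, mul_one]
  abel

lemma ΔR9 : ΔF R9 = gEm ⊗ₜ[Rpow] R9 + R9 ⊗ₜ[Rpow] gEm := by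
  simp only [R9, map_sub, map_mul, ΔF, gx₁, gEm, FreeAlgebra.lift_ι_apply]
  simp only [Algebra.TensorProduct.tmul_mul_tmul, TensorProduct.tmul_sub, TensorProduct.sub_tmul,
    TensorProduct.tmul_add, TensorProduct.add_tmul, mul_sub, sub_mul, mul_add, add_mul,
    one_mul, mul_one]
  abel

lemma ΔR10 : ΔF R10 = R10 ⊗ₜ[Rpow] (gEp * gEm) + 1 ⊗ₜ[Rpow] R10 := by
  simp only [R10, map_sub, map_mul, map_one, ΔF, gEp, gEm, FreeAlgebra.lift_ι_apply,
    Algebra.TensorProduct.tmul_mul_tmul, Algebra.TensorProduct.one_def,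
    TensorProduct.tmul_sub, TensorProduct.sub_tmul, one_mul, mul_one]
  abel

lemma ΔR11 : ΔF R11 = R11 ⊗ₜ[Rpow] (gEm * gEp) + 1 ⊗ₜ[Rpow] R11 := by
  simp only [R11, map_sub, map_mul, map_one, ΔF, gEp, gEm, FreeAlgebra.lift_ι_apply,
    Algebra.TensorProduct.tmul_mul_tmul, Algebra.TensorProduct.one_def,
    TensorProduct.tmul_sub, TensorProduct.sub_tmul, one_mul, mul_one]
  abel

lemma ΔF_gen_mem {A : Rpow} {r : FreeF} (hr : r ∈ IGens A) : ΔF r ∈ IεTensor A := by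
  simp only [IGens, Set.mem_insert_iff, Set.mem_singleton_iff] at hr
  rcases hr with rfl | rfl | rfl | rfl | rfl | rfl | rfl | rfl | rfl | rfl | rfl
  · rw [show gx₁ * gx₂ - gx₂ * gx₁ - (2 * εs) • gx₂ = R1 from rfl, ΔR1]
    exact add_mem (add_mem (add_mem (tmul_mem_right _ mR9) (tmul_mem_right _ mR1))
      (tmul_mem_left mR1 _)) (tmul_mem_left mR8 _)
  · rw [show gx₁ * gx₃ - gx₃ * gx₁ + (2 * εs) • gx₃ = R2 from rfl, ΔR2]
    exact add_mem (add_mem (add_mem (tmul_mem_right _ mR9) (tmul_mem_right _ mR2))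
      (tmul_mem_left mR2 _)) (tmul_mem_left mR8 _)
  · rw [show gx₂ * gx₃ - gx₃ * gx₂ - (εs * A) • (gEp ^ 2 - gEm ^ 2) = R3 A from rfl, ΔR3]
    exact IεTensor_sub_mem (add_mem (IεTensor_sub_mem (add_mem (add_mem (tmul_mem_left mR3 _)
      (tmul_mem_right _ mR3)) (tmul_mem_right _ mR7)) (tmul_mem_left mR4 _))
      (tmul_mem_left mR6 _)) (tmul_mem_right _ mR5)
  · rw [show gEp * gx₂ - e2ε • (gx₂ * gEp) = R4 from rfl, ΔR4]
    exact IεTensor_sub_mem (add_mem (add_mem (tmul_mem_left mR4 _) (tmul_mem_right _ mR4))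
      (tmul_mem_right _ mR10)) (Submodule.smul_mem _ _ (tmul_mem_right _ mR11))
  · rw [show gEm * gx₂ - em2ε • (gx₂ * gEm) = R5 from rfl, ΔR5]
    exact IεTensor_sub_mem (add_mem (add_mem (tmul_mem_right _ mR5) (tmul_mem_left mR5 _))
      (tmul_mem_left mR11 _)) (Submodule.smul_mem _ _ (tmul_mem_left mR10 _))
  · rw [show gEp * gx₃ - em2ε • (gx₃ * gEp) = R6 from rfl, ΔR6]
    exact IεTensor_sub_mem (add_mem (add_mem (tmul_mem_left mR6 _) (tmul_mem_right _ mR6))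
      (tmul_mem_right _ mR10)) (Submodule.smul_mem _ _ (tmul_mem_right _ mR11))
  · rw [show gEm * gx₃ - e2ε • (gx₃ * gEm) = R7 from rfl, ΔR7]
    exact IεTensor_sub_mem (add_mem (add_mem (tmul_mem_right _ mR7) (tmul_mem_left mR7 _))
      (tmul_mem_left mR11 _)) (Submodule.smul_mem _ _ (tmul_mem_left mR10 _))
  · rw [show gx₁ * gEp - gEp * gx₁ = R8 from rfl, ΔR8]
    exact add_mem (tmul_mem_right _ mR8) (tmul_mem_left mR8 _)
  · rw [show gx₁ * gEm - gEm * gx₁ = R9 from rfl, ΔR9]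
    exact add_mem (tmul_mem_right _ mR9) (tmul_mem_left mR9 _)
  · rw [show gEp * gEm - 1 = R10 from rfl, ΔR10]
    exact add_mem (tmul_mem_left mR10 _) (tmul_mem_right _ mR10)
  · rw [show gEm * gEp - 1 = R11 from rfl, ΔR11]
    exact add_mem (tmul_mem_left mR11 _) (tmul_mem_right _ mR11)

/-- The two-sided ideal `I_ε` is a coideal for the coproduct `Δ`:
`Δ(I_ε) ⊆ I_ε ⊗ 𝓕̃ + 𝓕̃ ⊗ I_ε`. -/
theorem Iε_is_coideal (A : Rpow) : ∀ x ∈ Iε A, ΔF x ∈ IεTensor A := by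
  intro x hx
  induction hx using Submodule.span_induction with
  | mem y hy =>
    obtain ⟨a, b, r, hr, rfl⟩ := hy
    rw [map_mul, map_mul]
    exact IεTensor_mul_right _ (IεTensor_mul_left _ (ΔF_gen_mem hr))
  | zero => simpa using (IεTensor A).zero_mem
  | add x y _ _ hx hy => rw [map_add]; exact add_mem hx hy
  | smul r x _ hx => rw [map_smul]; exact Submodule.smul_mem _ _ hx

end
end

section
/- In the quotient algebra 𝓕 = 𝓕̃/I_ε, the ordered monomials x₁^{n₁}x₂^{n₂}x₃^{n₃}e^{mx₁} (n_i ∈ ℕ, m ∈ ℤ) are linearly independent over ℝ[[ε]]: their images at ε = 0 are linearly independent commutative monomials in ℝ[x₁,x₂,x₃,e^{±x₁}], hence any ℝ[[ε]]-linear relation among them must vanish. -/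
open PowerSeries

noncomputable section

namespace Stmt17

lemma hq : e2ε * em2ε = 1 := by
  rw [e2ε, em2ε, exp_mul_exp_eq_exp_add]
  have : (2 : ℝ) + (-2) = 0 := by norm_num
  rw [this, PowerSeries.rescale_zero]
  simp [PowerSeries.constantCoeff_exp]

lemma hqn (n : ℕ) : e2ε ^ n * em2ε ^ n = 1 := by
  rw [← mul_pow, hq, one_pow]

abbrev P : Type := ℕ × ℕ × ℕ × ℤ
abbrev V : Type := P →₀ Rpow

def δ (p : P) : V := Finsupp.single p 1

def mkOp (f : P → V) : Module.End Rpow V := Finsupp.lift V Rpow P f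

lemma mkOp_δ (f : P → V) (p : P) : mkOp f (δ p) = f p := by
  simp [mkOp, δ]

lemma op_ext {f g : Module.End Rpow V} (h : ∀ p : P, f (δ p) = g (δ p)) : f = g := by
  refine Finsupp.lhom_ext fun p r => ?_
  have hs : (Finsupp.single p r : V) = r • δ p := by simp [δ, Finsupp.smul_single]
  rw [hs, map_smul, map_smul, h]

def lam (b c : ℕ) : Rpow := (2 * εs) * (((b : ℤ) - (c : ℤ) : ℤ) : Rpow)

lemma lam_succ_left (b c : ℕ) : lam (b + 1) c = lam b c + 2 * εs := by
  simp only [lam]; push_cast; ring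

lemma lam_succ_right (b c : ℕ) : lam b (c + 1) = lam b c - 2 * εs := by
  simp only [lam]; push_cast; ring

def μc (A : Rpow) (b c : ℕ) : Rpow :=
  -((εs * A) * em2ε ^ (2 * c)) * ∑ k ∈ Finset.range b, e2ε ^ (2 * k)

def νc (A : Rpow) (b c : ℕ) : Rpow :=
  (εs * A) * e2ε ^ (2 * c) * ∑ k ∈ Finset.range b, em2ε ^ (2 * k)

lemma μc_zero (A : Rpow) (c : ℕ) : μc A 0 c = 0 := by simp [μc]
lemma νc_zero (A : Rpow) (c : ℕ) : νc A 0 c = 0 := by simp [νc]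

lemma μc_succ (A : Rpow) (b c : ℕ) :
    μc A (b + 1) c = μc A b c - (εs * A) * (e2ε ^ (2 * b) * em2ε ^ (2 * c)) := by
  simp only [μc, Finset.sum_range_succ]; ring

lemma νc_succ (A : Rpow) (b c : ℕ) :
    νc A (b + 1) c = νc A b c + (εs * A) * (em2ε ^ (2 * b) * e2ε ^ (2 * c)) := by
  simp only [νc, Finset.sum_range_succ]; ring

def Sh : Module.End Rpow V := mkOp fun p => δ (p.1 + 1, p.2)
def Dg : Module.End Rpow V := mkOp fun p => lam p.2.1 p.2.2.1 • δ p
def opX1 : Module.End Rpow V := Sh + Dg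
def opX2 : Module.End Rpow V := mkOp fun p => δ (p.1, p.2.1 + 1, p.2.2)
def opX3 (A : Rpow) : Module.End Rpow V :=
  mkOp fun p => δ (p.1, p.2.1, p.2.2.1 + 1, p.2.2.2)
    + μc A p.2.1 p.2.2.1 • δ (p.1, p.2.1 - 1, p.2.2.1, p.2.2.2 + 2)
    + νc A p.2.1 p.2.2.1 • δ (p.1, p.2.1 - 1, p.2.2.1, p.2.2.2 - 2)
def opE : Module.End Rpow V :=
  mkOp fun p => (e2ε ^ p.2.1 * em2ε ^ p.2.2.1) • δ (p.1, p.2.1, p.2.2.1, p.2.2.2 + 1)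
def opF : Module.End Rpow V :=
  mkOp fun p => (em2ε ^ p.2.1 * e2ε ^ p.2.2.1) • δ (p.1, p.2.1, p.2.2.1, p.2.2.2 - 1)

lemma Sh_δ (a b c : ℕ) (m : ℤ) : Sh (δ (a, b, c, m)) = δ (a + 1, b, c, m) := mkOp_δ _ _
lemma Dg_δ (a b c : ℕ) (m : ℤ) : Dg (δ (a, b, c, m)) = lam b c • δ (a, b, c, m) := mkOp_δ _ _
lemma opX1_δ (a b c : ℕ) (m : ℤ) :
    opX1 (δ (a, b, c, m)) = δ (a + 1, b, c, m) + lam b c • δ (a, b, c, m) := by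
  simp [opX1, Sh_δ, Dg_δ]
lemma opX2_δ (a b c : ℕ) (m : ℤ) : opX2 (δ (a, b, c, m)) = δ (a, b + 1, c, m) := mkOp_δ _ _
lemma opX3_δ (A : Rpow) (a b c : ℕ) (m : ℤ) :
    opX3 A (δ (a, b, c, m)) = δ (a, b, c + 1, m)
      + μc A b c • δ (a, b - 1, c, m + 2) + νc A b c • δ (a, b - 1, c, m - 2) := mkOp_δ _ _
lemma opE_δ (a b c : ℕ) (m : ℤ) :
    opE (δ (a, b, c, m)) = (e2ε ^ b * em2ε ^ c) • δ (a, b, c, m + 1) := mkOp_δ _ _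
lemma opF_δ (a b c : ℕ) (m : ℤ) :
    opF (δ (a, b, c, m)) = (em2ε ^ b * e2ε ^ c) • δ (a, b, c, m - 1) := mkOp_δ _ _

instance instNatAlgRpow : Algebra ℕ Rpow := Semiring.toNatAlgebra
instance instIntAlgRpow : Algebra ℤ Rpow := Ring.toIntAlgebra Rpow

lemma rel_comm12 : opX1 * opX2 - opX2 * opX1 = (2 * εs) • opX2 := by
  apply op_ext; rintro ⟨a, b, c, m⟩
  simp only [LinearMap.sub_apply, Module.End.mul_apply, LinearMap.smul_apply,
    opX1_δ, opX2_δ, map_add, map_smul, lam_succ_left]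
  module

lemma rel_commEp : opX1 * opE = opE * opX1 := by
  apply op_ext; rintro ⟨a, b, c, m⟩
  simp only [Module.End.mul_apply, opX1_δ, opE_δ, map_add, map_smul]
  module

lemma rel_commEm : opX1 * opF = opF * opX1 := by
  apply op_ext; rintro ⟨a, b, c, m⟩
  simp only [Module.End.mul_apply, opX1_δ, opF_δ, map_add, map_smul]
  module

lemma rel_epem : opE * opF = 1 := by
  apply op_ext; rintro ⟨a, b, c, m⟩
  simp only [Module.End.mul_apply, opE_δ, opF_δ, map_smul, Module.End.one_apply,
    sub_add_cancel, smul_smul]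
  rw [show em2ε ^ b * e2ε ^ c * (e2ε ^ b * em2ε ^ c) = (e2ε ^ b * em2ε ^ b) * (e2ε ^ c * em2ε ^ c) by ring,
    hqn, hqn, one_mul, one_smul]

lemma rel_emep : opF * opE = 1 := by
  apply op_ext; rintro ⟨a, b, c, m⟩
  simp only [Module.End.mul_apply, opE_δ, opF_δ, map_smul, Module.End.one_apply,
    add_sub_cancel_right, smul_smul]
  rw [show e2ε ^ b * em2ε ^ c * (em2ε ^ b * e2ε ^ c) = (e2ε ^ b * em2ε ^ b) * (e2ε ^ c * em2ε ^ c) by ring,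
    hqn, hqn, one_mul, one_smul]

lemma rel_ep2 : opE * opX2 = e2ε • (opX2 * opE) := by
  apply op_ext; rintro ⟨a, b, c, m⟩
  simp only [Module.End.mul_apply, LinearMap.smul_apply, opE_δ, opX2_δ, map_smul, smul_smul,
    pow_succ]
  module

lemma rel_em2 : opF * opX2 = em2ε • (opX2 * opF) := by
  apply op_ext; rintro ⟨a, b, c, m⟩
  simp only [Module.End.mul_apply, LinearMap.smul_apply, opF_δ, opX2_δ, map_smul, smul_smul,
    pow_succ]
  module

lemma idxI (m : ℤ) : m + 1 + 1 = m + 2 := by ring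
lemma idxJ (m : ℤ) : m - 1 - 1 = m - 2 := by ring
lemma idxA (m : ℤ) : m + 2 + 1 = m + 3 := by ring
lemma idxB (m : ℤ) : m + 1 + 2 = m + 3 := by ring
lemma idxC (m : ℤ) : m - 2 + 1 = m - 1 := by ring
lemma idxD (m : ℤ) : m + 1 - 2 = m - 1 := by ring
lemma idxE (m : ℤ) : m + 2 - 1 = m + 1 := by ring
lemma idxF (m : ℤ) : m - 1 + 2 = m + 1 := by ring
lemma idxG (m : ℤ) : m - 2 - 1 = m - 3 := by ring
lemma idxH (m : ℤ) : m - 1 - 2 = m - 3 := by ring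

lemma rel_comm13 (A : Rpow) : opX1 * opX3 A - opX3 A * opX1 = -((2 * εs) • opX3 A) := by
  apply op_ext; rintro ⟨a, b, c, m⟩
  rcases b with _ | b
  · simp only [LinearMap.sub_apply, Module.End.mul_apply, LinearMap.neg_apply,
      LinearMap.smul_apply, opX1_δ, opX3_δ, μc_zero, νc_zero, zero_smul, add_zero,
      map_add, map_smul, lam_succ_right]
    module
  · simp only [LinearMap.sub_apply, Module.End.mul_apply, LinearMap.neg_apply,
      LinearMap.smul_apply, opX1_δ, opX3_δ, map_add, map_smul, Nat.add_sub_cancel,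
      lam_succ_right, lam_succ_left]
    module

lemma rel_ep3 (A : Rpow) : opE * opX3 A = em2ε • (opX3 A * opE) := by
  apply op_ext; rintro ⟨a, b, c, m⟩
  rcases b with _ | b
  · simp only [Module.End.mul_apply, LinearMap.smul_apply, opE_δ, opX3_δ, μc_zero, νc_zero,
      zero_smul, add_zero, map_add, map_smul, smul_smul, pow_succ,
      idxA, idxB, idxC, idxD, idxE, idxF, idxG, idxH, idxI, idxJ]
    match_scalars <;> ring
  · simp only [Module.End.mul_apply, LinearMap.smul_apply, opE_δ, opX3_δ, map_add, map_smul,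
      smul_smul, Nat.add_sub_cancel, pow_succ,
      idxA, idxB, idxC, idxD, idxE, idxF, idxG, idxH, idxI, idxJ]
    match_scalars
    · ring
    · linear_combination (-(μc A (b+1) c)) * em2ε ^ c * e2ε ^ b * hq
    · linear_combination (-(νc A (b+1) c)) * em2ε ^ c * e2ε ^ b * hq

lemma rel_em3 (A : Rpow) : opF * opX3 A = e2ε • (opX3 A * opF) := by
  apply op_ext; rintro ⟨a, b, c, m⟩
  rcases b with _ | b
  · simp only [Module.End.mul_apply, LinearMap.smul_apply, opF_δ, opX3_δ, μc_zero, νc_zero,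
      zero_smul, add_zero, map_add, map_smul, smul_smul, pow_succ,
      idxA, idxB, idxC, idxD, idxE, idxF, idxG, idxH, idxI, idxJ]
    match_scalars
    ring
  · simp only [Module.End.mul_apply, LinearMap.smul_apply, opF_δ, opX3_δ, map_add, map_smul,
      smul_smul, Nat.add_sub_cancel, pow_succ,
      idxA, idxB, idxC, idxD, idxE, idxF, idxG, idxH, idxI, idxJ]
    match_scalars
    · ring
    · linear_combination (-(μc A (b+1) c)) * e2ε ^ c * em2ε ^ b * hq
    · linear_combination (-(νc A (b+1) c)) * e2ε ^ c * em2ε ^ b * hq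

lemma rel_comm23 (A : Rpow) :
    opX2 * opX3 A - opX3 A * opX2 = (εs * A) • (opE ^ 2 - opF ^ 2) := by
  apply op_ext; rintro ⟨a, b, c, m⟩
  rcases b with _ | b
  · simp only [pow_two, LinearMap.sub_apply, Module.End.mul_apply, LinearMap.smul_apply,
      opX2_δ, opX3_δ, opE_δ, opF_δ, μc_zero, νc_zero, zero_smul, add_zero,
      map_add, map_smul, smul_smul, μc_succ, νc_succ,
      idxA, idxB, idxC, idxD, idxE, idxF, idxG, idxH, idxI, idxJ]
    match_scalars <;> ring
  · simp only [pow_two, LinearMap.sub_apply, Module.End.mul_apply, LinearMap.smul_apply,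
      opX2_δ, opX3_δ, opE_δ, opF_δ, map_add, map_smul, smul_smul, Nat.add_sub_cancel,
      μc_succ, νc_succ,
      idxA, idxB, idxC, idxD, idxE, idxF, idxG, idxH, idxI, idxJ]
    match_scalars <;> ring

def φ (A : Rpow) : FreeF →ₐ[Rpow] Module.End Rpow V :=
  FreeAlgebra.lift Rpow ![opX1, opX2, opX3 A, opE, opF]

lemma φ_gx₁ (A : Rpow) : φ A gx₁ = opX1 := by
  simp [φ, gx₁]

lemma φ_gx₂ (A : Rpow) : φ A gx₂ = opX2 := by
  simp [φ, gx₂]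

lemma φ_gx₃ (A : Rpow) : φ A gx₃ = opX3 A := by
  simp [φ, gx₃]

lemma φ_gEp (A : Rpow) : φ A gEp = opE := by
  simp [φ, gEp]

lemma φ_gEm (A : Rpow) : φ A gEm = opF := by
  simp [φ, gEm]

variable {A : Rpow}

lemma φ_rel (A : Rpow) : ∀ ⦃x y : FreeF⦄, FRel A x y → φ A x = φ A y := by
  intro x y h
  cases h <;>
    simp only [map_mul, map_sub, map_smul, map_pow, map_one, map_neg,
      φ_gx₁, φ_gx₂, φ_gx₃, φ_gEp, φ_gEm]
  · exact rel_comm12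
  · exact rel_comm13 A
  · exact rel_comm23 A
  · exact rel_ep2
  · exact rel_em2
  · exact rel_ep3 A
  · exact rel_em3 A
  · exact rel_commEp
  · exact rel_commEm
  · exact rel_epem
  · exact rel_emep

def ψ (A : Rpow) : Falg A →ₐ[Rpow] Module.End Rpow V :=
  RingQuot.liftAlgHom Rpow ⟨φ A, φ_rel A⟩

def v₀ : V := δ (0, 0, 0, 0)

def T (A : Rpow) : Falg A →ₗ[Rpow] V where
  toFun x := ψ A x v₀
  map_add' x y := by simp [map_add]
  map_smul' r x := by simp [map_smul]

lemma Sh_pow (k a b c : ℕ) (m : ℤ) : (Sh ^ k) (δ (a, b, c, m)) = δ (a + k, b, c, m) := by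
  induction k with
  | zero => simp
  | succ k ih =>
    rw [pow_succ', Module.End.mul_apply, ih, Sh_δ, add_assoc]

lemma Dg_pow (k : ℕ) (p : P) : (Dg ^ k) (δ p) = lam p.2.1 p.2.2.1 ^ k • δ p := by
  obtain ⟨a, b, c, m⟩ := p
  dsimp only
  induction k with
  | zero => simp
  | succ k ih =>
    rw [pow_succ, Module.End.mul_apply, Dg_δ, map_smul, ih, smul_smul, mul_comm (lam b c), ← pow_succ]

lemma commute_ShDg : Commute Sh Dg := by
  apply op_ext; rintro ⟨a, b, c, m⟩
  simp only [Module.End.mul_apply, Sh_δ, Dg_δ, map_smul]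

lemma opX1_pow (n b c : ℕ) (m : ℤ) :
    (opX1 ^ n) (δ (0, b, c, m)) =
      ∑ k ∈ Finset.range (n + 1), ((n.choose k : Rpow) * lam b c ^ (n - k)) • δ (k, b, c, m) := by
  rw [opX1, commute_ShDg.add_pow, LinearMap.coe_sum, Finset.sum_apply]
  refine Finset.sum_congr rfl fun k hk => ?_
  rw [Module.End.mul_apply, Module.End.mul_apply, Module.End.natCast_apply,
    map_nsmul, map_nsmul, Dg_pow, map_smul, Sh_pow]
  rw [← Nat.cast_smul_eq_nsmul Rpow, smul_smul, mul_comm]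
  norm_num

lemma opE_pow (k : ℕ) (m : ℤ) : (opE ^ k) (δ (0, 0, 0, m)) = δ (0, 0, 0, m + k) := by
  induction k with
  | zero => simp
  | succ k ih =>
    rw [pow_succ', Module.End.mul_apply, ih, opE_δ]
    simp only [pow_zero, one_mul, one_smul]
    congr 2
    push_cast
    ring

lemma opF_pow (k : ℕ) (m : ℤ) : (opF ^ k) (δ (0, 0, 0, m)) = δ (0, 0, 0, m - k) := by
  induction k with
  | zero => simp
  | succ k ih =>
    rw [pow_succ', Module.End.mul_apply, ih, opF_δ]
    simp only [pow_zero, one_mul, one_smul]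
    congr 2
    push_cast
    ring

lemma opX3_pow (A : Rpow) (k c : ℕ) (m : ℤ) :
    ((opX3 A) ^ k) (δ (0, 0, c, m)) = δ (0, 0, c + k, m) := by
  induction k with
  | zero => simp
  | succ k ih =>
    rw [pow_succ', Module.End.mul_apply, ih, opX3_δ, μc_zero, νc_zero, zero_smul, zero_smul,
      add_zero, add_zero, add_assoc]

lemma opX2_pow (k c : ℕ) (m : ℤ) :
    (opX2 ^ k) (δ (0, 0, c, m)) = δ (0, k, c, m) := by
  induction k with
  | zero => simp
  | succ k ih =>
    rw [pow_succ', Module.End.mul_apply, ih, opX2_δ]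

def vfam (p : P) : V :=
  ∑ k ∈ Finset.range (p.1 + 1),
    ((p.1.choose k : Rpow) * lam p.2.1 p.2.2.1 ^ (p.1 - k)) • δ (k, p.2)

lemma T_fam (A : Rpow) (p : P) :
    T A (πF A (gx₁ ^ p.1 * gx₂ ^ p.2.1 * gx₃ ^ p.2.2.1 * epow p.2.2.2)) = vfam p := by
  obtain ⟨n1, n2, n3, m⟩ := p
  show ψ A (RingQuot.mkAlgHom Rpow (FRel A) _) v₀ = _
  rw [ψ, RingQuot.liftAlgHom_mkAlgHom_apply]
  simp only [map_mul, map_pow, φ_gx₁, φ_gx₂, φ_gx₃, Module.End.mul_apply]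
  have hepow : (φ A (epow m)) v₀ = δ (0, 0, 0, m) := by
    rcases le_or_gt 0 m with hm | hm
    · rw [epow, if_pos hm, map_pow, φ_gEp, v₀, opE_pow,
        show (0:ℤ) + (m.toNat : ℤ) = m by omega]
    · rw [epow, if_neg (by omega), map_pow, φ_gEm, v₀, opF_pow,
        show (0:ℤ) - ((-m).toNat : ℤ) = m by omega]
  rw [hepow, opX3_pow, zero_add, opX2_pow, opX1_pow]
  rfl

lemma vfam_apply (i : P) (a : ℕ) (u : ℕ × ℕ × ℤ) :
    vfam i (a, u) =
      if u = i.2 ∧ a ≤ i.1 then (i.1.choose a : Rpow) * lam i.2.1 i.2.2.1 ^ (i.1 - a)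
      else 0 := by
  classical
  obtain ⟨n, t⟩ := i
  dsimp only [vfam]
  rw [Finsupp.finset_sum_apply]
  by_cases ht : u = t
  · subst ht
    have hterm : ∀ k ∈ Finset.range (n + 1),
        (((n.choose k : Rpow) * lam u.1 u.2.1 ^ (n - k)) • δ (k, u)) (a, u)
          = if k = a then (n.choose k : Rpow) * lam u.1 u.2.1 ^ (n - k) else 0 := by
      intro k _
      rw [Finsupp.smul_apply, δ, Finsupp.single_apply, smul_eq_mul]
      simp only [Prod.mk.injEq, and_true]
      rw [mul_ite, mul_one, mul_zero]
    rw [Finset.sum_congr rfl hterm, Finset.sum_ite_eq' (Finset.range (n + 1))]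
    simp [Finset.mem_range, Nat.lt_succ_iff]
  · rw [if_neg (by tauto)]
    refine Finset.sum_eq_zero fun k _ => ?_
    rw [Finsupp.smul_apply, δ, Finsupp.single_apply,
      if_neg (fun h => ht (congrArg Prod.snd h).symm), smul_zero]

lemma vfam_li : LinearIndependent Rpow vfam := by
  classical
  rw [linearIndependent_iff']
  intro s g hsum p hp
  by_contra hg
  set s' : Finset P := s.filter (fun r => r.2 = p.2 ∧ g r ≠ 0) with hs'
  have hps' : p ∈ s' := by simp [hs', hp, hg]
  have hne : (s'.image Prod.fst).Nonempty := ⟨p.1, Finset.mem_image_of_mem _ hps'⟩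
  set N := (s'.image Prod.fst).max' hne with hN
  obtain ⟨r0, hr0s', hr0⟩ := Finset.mem_image.mp ((s'.image Prod.fst).max'_mem hne)
  rw [← hN] at hr0
  have hr02 : r0.2 = p.2 := ((Finset.mem_filter.mp hr0s').2).1
  have hr0g : g r0 ≠ 0 := ((Finset.mem_filter.mp hr0s').2).2
  have hr0eq : r0 = (N, p.2) := by rw [← hr0, ← hr02]
  have hmem : (N, p.2) ∈ s := hr0eq ▸ (Finset.mem_filter.mp hr0s').1
  have hcoord := congrArg (fun w : V => w (N, p.2)) hsum
  simp only [Finsupp.coe_zero, Pi.zero_apply] at hcoord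
  rw [Finsupp.finset_sum_apply] at hcoord
  have hsum2 : ∑ i ∈ s, g i * vfam i (N, p.2) = 0 := by
    refine Eq.trans (Finset.sum_congr rfl fun i _ => ?_) hcoord
    rw [Finsupp.smul_apply, smul_eq_mul]
  rw [Finset.sum_eq_single_of_mem (N, p.2) hmem ?side] at hsum2
  case side =>
    intro b hb hbne
    by_cases hgb : g b = 0
    · rw [hgb, zero_mul]
    · by_cases hb2 : b.2 = p.2
      · have hbs' : b ∈ s' := Finset.mem_filter.mpr ⟨hb, hb2, hgb⟩
        have hble : b.1 ≤ N := Finset.le_max' _ _ (Finset.mem_image_of_mem _ hbs')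
        have hbne1 : b.1 ≠ N := by
          intro hh
          exact hbne (by rw [← hh, ← hb2])
        rw [vfam_apply, if_neg (by simp only [not_and]; intro _; omega), mul_zero]
      · rw [vfam_apply, if_neg (by tauto), mul_zero]
  · rw [vfam_apply, if_pos ⟨rfl, le_refl N⟩] at hsum2
    simp only [Nat.choose_self, Nat.cast_one, Nat.sub_self, pow_zero, mul_one, one_mul] at hsum2
    exact hr0g (hr0eq ▸ hsum2)

end Stmt17

/-- In the quotient algebra `𝓕 = 𝓕̃/I_ε`, the ordered monomials
`x₁^{n₁} x₂^{n₂} x₃^{n₃} e^{m x₁}` (`nᵢ ∈ ℕ`, `m ∈ ℤ`) are linearly independent over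
`ℝ[[ε]]` (at `ε = 0` they become distinct commutative monomials, so any `ℝ[[ε]]`-linear
relation among them vanishes). -/
theorem ordered_monomials_linearIndependent (A : Rpow) (hA : IsUnit A) :
    LinearIndependent Rpow
      (fun p : ℕ × ℕ × ℕ × ℤ =>
        πF A (gx₁ ^ p.1 * gx₂ ^ p.2.1 * gx₃ ^ p.2.2.1 * epow p.2.2.2)) := by
  intro l l' hll'
  have hT := congrArg (Stmt17.T A) hll'
  rw [Finsupp.apply_linearCombination, Finsupp.apply_linearCombination] at hT
  have hfe : (⇑(Stmt17.T A)) ∘ (fun p : ℕ × ℕ × ℕ × ℤ =>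
      πF A (gx₁ ^ p.1 * gx₂ ^ p.2.1 * gx₃ ^ p.2.2.1 * epow p.2.2.2)) = Stmt17.vfam :=
    funext fun p => Stmt17.T_fam A p
  rw [hfe] at hT
  exact Stmt17.vfam_li hT

end
end
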